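/- Let f: ℝⁿ → ℝ∪{+∞} be twice differentiable at x̄ in the extended sense. Then: (a) the limiting subdifferential satisfies ∂f(x̄) = {∇f(x̄)}; (b) for every ε > 0 there is a neighborhood U of x̄ such that for all x ∈ U one has ∂f(x) ≠ ∅ and ∂f(x) ⊂ {∇f(x̄) + ∇²f(x̄)(x−x̄)} + ε‖x−x̄‖·B, where B is the closed unit ball; (c) f is strictly differentiable at x̄, i.e. lim_{x,u→x̄, x≠u} [f(x)−f(u)−⟨∇f(x̄),x−u⟩]/‖x−u‖ = 0; (d) f(x) = f(x̄) + ⟨∇f(x̄), x−x̄⟩ + ½⟨x−x̄, ∇²f(x̄)(x−x̄)⟩ + o(‖x−x̄‖²) as x → x̄. -/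

import Mathlib

open Filter Topology MeasureTheory Set RealInnerProductSpace

noncomputable section

section TangentCones

variable {X : Type*} [AddCommGroup X] [Module ℝ X] [TopologicalSpace X]

/-- Bouligand (sequential) tangent cone. -/
def seqTangentCone (Ω : Set X) (xb : X) : Set X :=
  {v | ∃ (t : ℕ → ℝ) (vk : ℕ → X), (∀ k, 0 < t k) ∧ Tendsto t atTop (𝓝 0) ∧
      Tendsto vk atTop (𝓝 v) ∧ ∀ k, xb + t k • vk k ∈ Ω}

/-- Second-order tangent set. -/
def secondOrderTangent (Ω : Set X) (xb w : X) : Set X :=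
  {u | ∃ (t : ℕ → ℝ) (uk : ℕ → X), (∀ k, 0 < t k) ∧ Tendsto t atTop (𝓝 0) ∧
      Tendsto uk atTop (𝓝 u) ∧ ∀ k, xb + t k • w + ((t k)^2/2) • uk k ∈ Ω}

/-- Parabolic derivability of a set at `xb` for `w`. -/
def ParabolicallyDerivable (Ω : Set X) (xb w : X) : Prop :=
  (secondOrderTangent Ω xb w).Nonempty ∧
  ∀ u ∈ secondOrderTangent Ω xb w, ∃ (ε : ℝ) (ξ : ℝ → X), 0 < ε ∧
    (∀ t ∈ Icc (0:ℝ) ε, ξ t ∈ Ω) ∧ ξ 0 = xb ∧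
    Tendsto (fun t : ℝ => t⁻¹ • (ξ t - ξ 0)) (𝓝[>] 0) (𝓝 w) ∧
    Tendsto (fun t : ℝ => (2/t^2) • (ξ t - ξ 0 - t • w)) (𝓝[>] 0) (𝓝 u)

end TangentCones

section Subdiff

variable {X : Type*} [NormedAddCommGroup X] [InnerProductSpace ℝ X]

/-- Regular (Fréchet) subdifferential of an `ℝ∪{+∞}`-valued function. -/
def regSubdiff (f : X → EReal) (xb : X) : Set X :=
  {v | f xb ≠ ⊤ ∧ (0 : EReal) ≤
    Filter.liminf (fun x => ((‖x - xb‖⁻¹ : ℝ) : EReal) *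
      (f x - f xb - ((⟪v, x - xb⟫ : ℝ) : EReal))) (𝓝[≠] xb)}

/-- Proximal subdifferential. -/
def proxSubdiff (f : X → EReal) (xb : X) : Set X :=
  {v | f xb ≠ ⊤ ∧ (⊥ : EReal) <
    Filter.liminf (fun x => (((‖x - xb‖^2)⁻¹ : ℝ) : EReal) *
      (f x - f xb - ((⟪v, x - xb⟫ : ℝ) : EReal))) (𝓝[≠] xb)}

/-- Limiting (Mordukhovich) subdifferential. -/
def limSubdiff (f : X → EReal) (xb : X) : Set X :=
  {v | f xb ≠ ⊤ ∧ ∃ (x : ℕ → X) (vk : ℕ → X), Tendsto x atTop (𝓝 xb) ∧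
      Tendsto (fun k => f (x k)) atTop (𝓝 (f xb)) ∧ Tendsto vk atTop (𝓝 v) ∧
      ∀ k, vk k ∈ regSubdiff f (x k)}

/-- Graph of the limiting subdifferential. -/
def gphSubdiff (f : X → EReal) : Set (X × X) := {p | p.2 ∈ limSubdiff f p.1}

/-- Subgradient graphical derivative `D(∂f)(xb|vb)(w)`. -/
def gDeriv (f : X → EReal) (xb vb : X) (w : X) : Set X :=
  {z | (w, z) ∈ seqTangentCone (gphSubdiff f) (xb, vb)}

/-- First-order difference quotient. -/
def sdQuot (f : X → EReal) (xb : X) (t : ℝ) (w : X) : EReal :=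
  ((t⁻¹ : ℝ) : EReal) * (f (xb + t • w) - f xb)

/-- Subderivative `df(xb)(w)`. -/
def subderiv (f : X → EReal) (xb w : X) : EReal :=
  Filter.liminf (fun p : ℝ × X => sdQuot f xb p.1 p.2) ((𝓝[>] (0:ℝ)) ×ˢ 𝓝 w)

/-- Second-order difference quotient `Δ²_t f(xb, v)(w)`. -/
def ssdQuot (f : X → EReal) (xb v : X) (t : ℝ) (w : X) : EReal :=
  ((2 / t^2 : ℝ) : EReal) * (f (xb + t • w) - f xb - ((t * ⟪v, w⟫ : ℝ) : EReal))

/-- Second subderivative `d²f(xb|v)(w)`. -/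
def secondSubderiv (f : X → EReal) (xb v w : X) : EReal :=
  Filter.liminf (fun p : ℝ × X => ssdQuot f xb v p.1 p.2) ((𝓝[>] (0:ℝ)) ×ˢ 𝓝 w)

/-- Parabolic difference quotient. -/
def psdQuot (f : X → EReal) (xb w : X) (t : ℝ) (z : X) : EReal :=
  ((2 / t^2 : ℝ) : EReal) *
    (f (xb + t • w + (t^2/2) • z) - f xb - (t : EReal) * subderiv f xb w)

/-- Parabolic subderivative `d²f(xb)(w|z)`. -/
def parabolicSubderiv (f : X → EReal) (xb w z : X) : EReal :=
  Filter.liminf (fun p : ℝ × X => psdQuot f xb w p.1 p.2) ((𝓝[>] (0:ℝ)) ×ˢ 𝓝 z)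

/-- Twice epi-differentiability at `xb` for `v`. -/
def TwiceEpiDiff (f : X → EReal) (xb v : X) : Prop :=
  ∀ w : X, ∀ t : ℕ → ℝ, (∀ k, 0 < t k) → Tendsto t atTop (𝓝 0) →
    ∃ wk : ℕ → X, Tendsto wk atTop (𝓝 w) ∧
      Tendsto (fun k => ssdQuot f xb v (t k) (wk k)) atTop (𝓝 (secondSubderiv f xb v w))

/-- Parabolic epi-differentiability at `xb` for `w`. -/
def ParaEpiDiff (f : X → EReal) (xb w : X) : Prop :=
  {z : X | parabolicSubderiv f xb w z < ⊤}.Nonempty ∧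
  ∀ z : X, ∀ t : ℕ → ℝ, (∀ k, 0 < t k) → Tendsto t atTop (𝓝 0) →
    ∃ zk : ℕ → X, Tendsto zk atTop (𝓝 z) ∧
      Tendsto (fun k => psdQuot f xb w (t k) (zk k)) atTop (𝓝 (parabolicSubderiv f xb w z))

/-- Parabolic regularity at `xb` for `v`. -/
def ParaRegular (f : X → EReal) (xb v : X) : Prop :=
  f xb ≠ ⊤ ∧ ∀ w : X, secondSubderiv f xb v w < ⊤ →
    ∃ (t : ℕ → ℝ) (wk : ℕ → X), (∀ k, 0 < t k) ∧ Tendsto t atTop (𝓝 0) ∧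
      Tendsto wk atTop (𝓝 w) ∧
      Tendsto (fun k => ssdQuot f xb v (t k) (wk k)) atTop (𝓝 (secondSubderiv f xb v w)) ∧
      ∃ C : ℝ, ∀ k, ‖wk k - w‖ ≤ C * t k

/-- Prox-regularity of `f` at `xb` for `vb`. -/
def ProxRegular (f : X → EReal) (xb vb : X) : Prop :=
  ∃ r ε : ℝ, 0 < r ∧ 0 < ε ∧
    ∀ x ∈ Metric.closedBall xb ε, ∀ u ∈ Metric.closedBall xb ε,
      f u - f xb < (ε : EReal) → f xb - f u < (ε : EReal) →
      ∀ v ∈ limSubdiff f u ∩ Metric.closedBall vb ε,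
        f u + ((⟪v, x - u⟫ - r/2 * ‖x - u‖^2 : ℝ) : EReal) ≤ f x

/-- Subdifferential continuity of `f` at `xb` for `vb`. -/
def SubdiffCont (f : X → EReal) (xb vb : X) : Prop :=
  ∀ (x v : ℕ → X), Tendsto x atTop (𝓝 xb) → Tendsto v atTop (𝓝 vb) →
    (∀ k, v k ∈ limSubdiff f (x k)) →
    Tendsto (fun k => f (x k)) atTop (𝓝 (f xb))

/-- Strong metric subregularity of `∂f` at `xb` for `0`. -/
def StrongMetricSubreg (f : X → EReal) (xb : X) : Prop :=
  (0 : X) ∈ limSubdiff f xb ∧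
  ∃ κ : ℝ, 0 < κ ∧ ∃ U ∈ 𝓝 xb, ∀ x ∈ U, ∀ v ∈ limSubdiff f x, ‖x - xb‖ ≤ κ * ‖v‖

/-- Effective domain of an `ℝ∪{+∞}`-valued function. -/
def edom (f : X → EReal) : Set X := {x | f x < ⊤}

/-- Convexity for `EReal`-valued functions. -/
def EConvexOn (g : X → EReal) : Prop :=
  ∀ x y : X, ∀ a b : ℝ, 0 ≤ a → 0 ≤ b → a + b = 1 →
    g (a • x + b • y) ≤ ((a : ℝ) : EReal) * g x + ((b : ℝ) : EReal) * g y

/-- Convex (analytic) subdifferential. -/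
def convexSubdiff (g : X → EReal) (yb : X) : Set X :=
  {y | ∀ z : X, g yb + ((⟪y, z - yb⟫ : ℝ) : EReal) ≤ g z}

/-- Fenchel conjugate. -/
def fenchel (θ : X → EReal) (v : X) : EReal :=
  ⨆ z : X, ((⟪v, z⟫ : ℝ) : EReal) - θ z

/-- Lipschitz continuity around `yb` relative to the domain, with constant `l`. -/
def LipRelDom (g : X → EReal) (yb : X) (l : ℝ) : Prop :=
  0 ≤ l ∧ ∃ V ∈ 𝓝 yb, ∀ y₁ ∈ edom g ∩ V, ∀ y₂ ∈ edom g ∩ V,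
    g y₁ ≤ g y₂ + ((l * ‖y₁ - y₂‖ : ℝ) : EReal)

end Subdiff

section TDE

variable {X : Type*} [NormedAddCommGroup X] [InnerProductSpace ℝ X]
  [CompleteSpace X] [MeasureSpace X]

/-- Twice differentiability in the extended sense for a real-valued function. -/
def TwiceDiffExtR (f : X → ℝ) (xb : X) (Df : X) (A : X →L[ℝ] X) : Prop :=
  HasGradientAt f Df xb ∧
  ∃ (U D : Set X) (K : NNReal) (G : X → X),
    U ∈ 𝓝 xb ∧ D ⊆ U ∧ volume (U \ D) = 0 ∧
    LipschitzOnWith K f U ∧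
    (∀ y ∈ D, HasGradientAt f (G y) y) ∧
    Tendsto (fun y => (‖y - xb‖⁻¹ : ℝ) • (G y - Df - A (y - xb))) (𝓝[D \ {xb}] xb) (𝓝 0)

/-- Twice differentiability in the extended sense for an `ℝ∪{+∞}`-valued function
(finite and Lipschitz around `xb`). -/
def TwiceDiffExt (f : X → EReal) (xb : X) (Df : X) (A : X →L[ℝ] X) : Prop :=
  f xb ≠ ⊤ ∧
  HasGradientAt (fun y => (f y).toReal) Df xb ∧
  ∃ (U D : Set X) (K : NNReal) (G : X → X),
    U ∈ 𝓝 xb ∧ D ⊆ U ∧ volume (U \ D) = 0 ∧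
    (∀ y ∈ U, f y ≠ ⊤) ∧
    LipschitzOnWith K (fun y => (f y).toReal) U ∧
    (∀ y ∈ D, HasGradientAt (fun z => (f z).toReal) (G y) y) ∧
    Tendsto (fun y => (‖y - xb‖⁻¹ : ℝ) • (G y - Df - A (y - xb))) (𝓝[D \ {xb}] xb) (𝓝 0)

end TDE

/-- Euclidean space shorthand. -/
abbrev Eucl (n : ℕ) := EuclideanSpace ℝ (Fin n)

/-- Bundle `m` real numbers into a point of `Eucl m`. -/
def vecOf {m : ℕ} (f : Fin m → ℝ) : Eucl m := (EuclideanSpace.equiv (Fin m) ℝ).symm f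

/-- The Jacobian, as a continuous linear map, built from the component gradients. -/
def jacCLM {n m : ℕ} (DF : Fin m → Eucl n) : Eucl n →L[ℝ] Eucl m :=
  ((EuclideanSpace.equiv (Fin m) ℝ).symm.toContinuousLinearMap).comp
    (ContinuousLinearMap.pi fun i => (innerSL ℝ (DF i)))

end


section AuxProofs

open intervalIntegral in
private lemma lip_deriv_bound_aux {K : NNReal} {φ : ℝ → ℝ} (hφ : LipschitzWith K φ) {t : ℝ}
    (h : DifferentiableAt ℝ φ t) : |deriv φ t| ≤ K := by
  have hd := h.hasDerivAt
  rw [hasDerivAt_iff_tendsto_slope] at hd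
  have habs : Tendsto (fun s => |slope φ t s|) (𝓝[≠] t) (𝓝 |deriv φ t|) :=
    (continuous_abs.tendsto _).comp hd
  refine le_of_tendsto habs ?_
  filter_upwards [self_mem_nhdsWithin] with s hs
  have : |φ s - φ t| ≤ K * |s - t| := by
    have := hφ.dist_le_mul s t
    simpa [Real.dist_eq] using this
  rw [slope_def_field]
  rw [div_eq_mul_inv, abs_mul, abs_inv]
  rcases eq_or_ne s t with rfl | hst
  · simp
  · have hst' : (0:ℝ) < |s - t| := abs_pos.2 (sub_ne_zero.2 hst)
    calc |φ s - φ t| * |s - t|⁻¹ ≤ (K * |s - t|) * |s - t|⁻¹ := by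
          gcongr
      _ = K := by field_simp

private lemma lip_deriv_ae_bound_aux {K : NNReal} {φ : ℝ → ℝ} (hφ : LipschitzWith K φ) :
    ∀ᵐ t, |deriv φ t| ≤ K := by
  filter_upwards [hφ.ae_differentiableAt_of_real] with t ht using lip_deriv_bound_aux hφ ht

private lemma lip_deriv_integrableOn_aux {K : NNReal} {φ : ℝ → ℝ} (hφ : LipschitzWith K φ) :
    IntegrableOn (deriv φ) (Icc (0:ℝ) 1) ∧ IntegrableOn (deriv φ) (Ioc (0:ℝ) 1) := by
  constructor <;>
  · have hconst : IntegrableOn (fun _ : ℝ => (K:ℝ)) (Icc (0:ℝ) 1) := by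
      refine integrableOn_const ?_
      simp [Real.volume_Icc]
    have hconst' : IntegrableOn (fun _ : ℝ => (K:ℝ)) (Ioc (0:ℝ) 1) := by
      refine integrableOn_const ?_
      simp [Real.volume_Ioc]
    first
      | refine Integrable.mono' hconst ((measurable_deriv φ).aestronglyMeasurable.restrict) ?_
      | refine Integrable.mono' hconst' ((measurable_deriv φ).aestronglyMeasurable.restrict) ?_
    exact ae_restrict_of_ae (by filter_upwards [lip_deriv_ae_bound_aux hφ] with t ht using by simpa using ht)

private lemma ftc_lipschitz_aux {K : NNReal} {φ : ℝ → ℝ} (hφ : LipschitzWith K φ) :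
    φ 1 - φ 0 = ∫ t in Ioc (0:ℝ) 1, deriv φ t := by
  have hcont : Continuous φ := hφ.continuous
  set A : ℝ → ℝ := fun h => ∫ t in Ioc (0:ℝ) 1, (φ (t + h) - φ t) / h with hA
  have hC1 : Tendsto A (𝓝[>] (0:ℝ)) (𝓝 (∫ t in Ioc (0:ℝ) 1, deriv φ t)) := by
    refine tendsto_integral_filter_of_dominated_convergence (fun _ => (K:ℝ)) ?_ ?_ ?_ ?_
    · filter_upwards with h
      exact ((hcont.comp (continuous_id.add continuous_const)).sub hcont).div_const h |>.aestronglyMeasurable.restrict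
    · filter_upwards [self_mem_nhdsWithin] with h (hh : 0 < h)
      refine ae_of_all _ fun t => ?_
      have : |φ (t + h) - φ t| ≤ K * |h| := by
        have := hφ.dist_le_mul (t + h) t
        simpa [Real.dist_eq] using this
      rw [Real.norm_eq_abs, abs_div]
      rw [div_le_iff₀ (abs_pos.2 hh.ne')]
      exact this
    · refine (integrableOn_const ?_)
      simp [Real.volume_Ioc]
    · refine ae_restrict_of_ae ?_
      filter_upwards [hφ.ae_differentiableAt_of_real] with t ht
      have hd := ht.hasDerivAt
      rw [hasDerivAt_iff_tendsto_slope] at hd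
      have hmap : Tendsto (fun h : ℝ => t + h) (𝓝[>] (0:ℝ)) (𝓝[≠] t) := by
        refine tendsto_nhdsWithin_of_tendsto_nhds_of_eventually_within _ ?_ ?_
        · have : Tendsto (fun h : ℝ => t + h) (𝓝 (0:ℝ)) (𝓝 (t + 0)) :=
            (continuous_add_left t).tendsto 0
          simpa using this.mono_left nhdsWithin_le_nhds
        · filter_upwards [self_mem_nhdsWithin] with h (hh : 0 < h)
          simp [hh.ne']
      have := hd.comp hmap
      refine this.congr fun h => ?_
      simp [slope_def_field]
  have hic : ∀ a b : ℝ, IntervalIntegrable φ volume a b := fun a b => hcont.intervalIntegrable a b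
  have keyA : ∀ h : ℝ, 0 < h → A h = (∫ t in (1:ℝ)..(1+h), φ t) / h - (∫ t in (0:ℝ)..(0+h), φ t) / h := by
    intro h hh
    have e1 : A h = (∫ t in (0:ℝ)..1, (φ (t + h) - φ t)) / h := by
      rw [hA, intervalIntegral.integral_of_le (by norm_num : (0:ℝ) ≤ 1), ← MeasureTheory.integral_div]
    have e2 : (∫ t in (0:ℝ)..1, (φ (t + h) - φ t)) =
        (∫ t in (0:ℝ)..1, φ (t + h)) - ∫ t in (0:ℝ)..1, φ t := by
      have hφh : IntervalIntegrable (fun x => φ (x + h)) volume 0 1 :=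
        (hcont.comp (continuous_id.add continuous_const)).intervalIntegrable _ _
      exact intervalIntegral.integral_sub hφh (hic 0 1)
    have e3 : (∫ t in (0:ℝ)..1, φ (t + h)) = ∫ t in (0+h:ℝ)..(1+h), φ t :=
      intervalIntegral.integral_comp_add_right (a := 0) (b := 1) φ h
    have e4 : (∫ t in (0+h:ℝ)..(1+h), φ t) = (∫ t in (0+h:ℝ)..1, φ t) + ∫ t in (1:ℝ)..(1+h), φ t :=
      (intervalIntegral.integral_add_adjacent_intervals (hic _ _) (hic _ _)).symm
    have e5 : (∫ t in (0:ℝ)..1, φ t) = (∫ t in (0:ℝ)..(0+h), φ t) + ∫ t in (0+h:ℝ)..1, φ t :=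
      (intervalIntegral.integral_add_adjacent_intervals (hic _ _) (hic _ _)).symm
    rw [e1, e2, e3, e4, e5]
    ring
  have T1 : Tendsto (fun h : ℝ => (∫ t in (1:ℝ)..(1+h), φ t) / h) (𝓝[>] (0:ℝ)) (𝓝 (φ 1)) := by
    have hF : HasDerivAt (fun u => ∫ t in (1:ℝ)..u, φ t) (φ 1) 1 :=
      intervalIntegral.integral_hasDerivAt_right (hic 1 1)
        hcont.stronglyMeasurable.stronglyMeasurableAtFilter hcont.continuousAt
    have := hF.tendsto_slope_zero.mono_left (nhdsWithin_mono _ fun x (hx : 0 < x) => hx.ne')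
    refine this.congr fun h => ?_
    simp [smul_eq_mul, div_eq_inv_mul]
  have T0 : Tendsto (fun h : ℝ => (∫ t in (0:ℝ)..(0+h), φ t) / h) (𝓝[>] (0:ℝ)) (𝓝 (φ 0)) := by
    have hF : HasDerivAt (fun u => ∫ t in (0:ℝ)..u, φ t) (φ 0) 0 :=
      intervalIntegral.integral_hasDerivAt_right (hic 0 0)
        hcont.stronglyMeasurable.stronglyMeasurableAtFilter hcont.continuousAt
    have := hF.tendsto_slope_zero.mono_left (nhdsWithin_mono _ fun x (hx : 0 < x) => hx.ne')
    refine this.congr fun h => ?_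
    simp [smul_eq_mul, div_eq_inv_mul]
  have hC2 : Tendsto A (𝓝[>] (0:ℝ)) (𝓝 (φ 1 - φ 0)) := by
    refine (T1.sub T0).congr' ?_
    filter_upwards [self_mem_nhdsWithin] with h (hh : 0 < h)
    exact (keyA h hh).symm
  exact tendsto_nhds_unique hC2 hC1

end AuxProofs


private lemma goodTranslate {n : ℕ} {N : Set (EuclideanSpace ℝ (Fin n))} (hN : MeasurableSet N)
    (h0 : volume N = 0) (z e : EuclideanSpace ℝ (Fin n)) {r : ℝ} (hr : 0 < r) :
    ∃ w : EuclideanSpace ℝ (Fin n), ‖w‖ < r ∧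
      ∀ᵐ t ∂(volume.restrict (Ioo (0:ℝ) 1)), z + t • e + w ∉ N := by
  set μ : Measure (EuclideanSpace ℝ (Fin n)) := volume
  set ν : Measure ℝ := volume.restrict (Ioo (0:ℝ) 1)
  have hνfin : IsFiniteMeasure ν := by
    constructor
    rw [Measure.restrict_apply_univ]
    simp [ν, Real.volume_Ioo]
  set S : Set (EuclideanSpace ℝ (Fin n) × ℝ) := {p | z + p.2 • e + p.1 ∈ N} with hS
  have hmS : MeasurableSet S := by
    have hc : Continuous fun p : EuclideanSpace ℝ (Fin n) × ℝ => z + p.2 • e + p.1 :=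
      ((continuous_const.add (continuous_snd.smul continuous_const))).add continuous_fst
    exact hc.measurable hN
  have hprod : (μ.prod ν) S = 0 := by
    rw [Measure.prod_apply_symm hmS]
    have : ∀ t : ℝ, μ ((fun x => (x, t)) ⁻¹' S) = 0 := by
      intro t
      have : ((fun x => (x, t)) ⁻¹' S) = (fun x => (z + t • e) + x) ⁻¹' N := by
        ext x; simp [hS, add_assoc]
      rw [this, measure_preimage_add]
      exact h0
    simp [this]
  have hae : ∀ᵐ p ∂(μ.prod ν), p ∉ S := by
    rw [ae_iff]
    simpa using hprod
  have hae2 := Measure.ae_ae_of_ae_prod hae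
  -- extract a w in the ball
  by_contra hcon
  push_neg at hcon
  have hball : μ {w | ¬ ∀ᵐ t ∂ν, z + t • e + w ∉ N} = 0 := by
    rw [← ae_iff]; exact hae2
  have hsub : Metric.ball (0 : EuclideanSpace ℝ (Fin n)) r ⊆
      {w | ¬ ∀ᵐ t ∂ν, z + t • e + w ∉ N} := by
    intro w hw
    simp only [mem_setOf_eq]
    intro h
    exact hcon w (by simpa [Metric.mem_ball, dist_zero_right] using hw) h
  have := measure_mono_null hsub hball
  have hpos : 0 < μ (Metric.ball (0 : EuclideanSpace ℝ (Fin n)) r) :=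
    Metric.measure_ball_pos _ _ hr
  rw [this] at hpos
  exact lt_irrefl _ hpos


private lemma segment_estimate {n : ℕ} {g : Eucl n → ℝ} {xb Df : Eucl n} {A : Eucl n →L[ℝ] Eucl n}
    {K : NNReal} {ρ ε : ℝ} (hε : 0 ≤ ε) {N : Set (Eucl n)}
    (hlip : LipschitzOnWith K g (Metric.ball xb ρ))
    (hGb : ∀ y ∈ Metric.ball xb ρ, y ∉ N → ∃ Gy, HasGradientAt g Gy y ∧
        ‖Gy - Df - A (y - xb)‖ ≤ ε * ‖y - xb‖)
    {z e : Eucl n} (hseg : ∀ t ∈ Icc (0:ℝ) 1, z + t • e ∈ Metric.ball xb ρ)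
    (hgood : ∀ᵐ t ∂(volume.restrict (Ioo (0:ℝ) 1)), z + t • e ∉ N) :
    |g (z + e) - g z - ⟪Df, e⟫ - ⟪A (z - xb), e⟫ - 1/2 * ⟪A e, e⟫|
      ≤ ε * ((‖z - xb‖ + ‖e‖) * ‖e‖) := by
  classical
  set φ₀ : ℝ → ℝ := fun t => g (z + t • e) with hφ₀
  have hlip0 : LipschitzOnWith (K * ‖e‖₊) φ₀ (Icc (0:ℝ) 1) := by
    refine LipschitzOnWith.of_dist_le_mul fun s hs t ht => ?_
    have h1 := hlip.dist_le_mul _ (hseg s hs) _ (hseg t ht)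
    refine h1.trans ?_
    have : dist (z + s • e) (z + t • e) = |s - t| * ‖e‖ := by
      rw [dist_eq_norm]
      simp [add_sub_add_left_eq_sub, ← sub_smul, norm_smul]
    rw [this, Real.dist_eq]
    push_cast
    ring_nf
    exact le_refl _
  obtain ⟨φ, hφlip, hagree⟩ := hlip0.extend_real
  set C₀ : ℝ := ⟪Df, e⟫ + ⟪A (z - xb), e⟫ with hC₀
  set C₁ : ℝ := ⟪A e, e⟫ with hC₁
  set M : ℝ := ε * ((‖z - xb‖ + ‖e‖) * ‖e‖) with hM
  have hMnn : 0 ≤ M := by positivity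
  -- the measure
  have hrestr : volume.restrict (Ioo (0:ℝ) 1) = volume.restrict (Ioc (0:ℝ) 1) :=
    Measure.restrict_congr_set Ioo_ae_eq_Ioc
  -- a.e. derivative identity and bound
  have haeb : ∀ᵐ t ∂(volume.restrict (Ioc (0:ℝ) 1)), |deriv φ t - (C₀ + t * C₁)| ≤ M := by
    rw [← hrestr]
    filter_upwards [hgood, ae_restrict_mem measurableSet_Ioo] with t htN htI
    have htIcc : t ∈ Icc (0:ℝ) 1 := Ioo_subset_Icc_self htI
    have hmem : z + t • e ∈ Metric.ball xb ρ := hseg t htIcc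
    obtain ⟨Gy, hGy, hGyb⟩ := hGb _ hmem htN
    -- derivative of φ₀ at t
    have hline : HasDerivAt (fun s : ℝ => z + s • e) e t := by
      simpa using ((hasDerivAt_id t).smul_const e).const_add z
    have hd0 : HasDerivAt φ₀ (⟪Gy, e⟫) t := by
      have := hGy.hasFDerivAt.comp_hasDerivAt t hline
      simpa [hφ₀, Function.comp_def] using this
    have hd : HasDerivAt φ (⟪Gy, e⟫) t := by
      refine hd0.congr_of_eventuallyEq ?_
      filter_upwards [Icc_mem_nhds htI.1 htI.2] with s hs
      exact (hagree hs).symm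
    rw [hd.deriv]
    have hexp : ⟪Gy, e⟫ - (C₀ + t * C₁) = ⟪Gy - Df - A (z + t • e - xb), e⟫ := by
      have : A (z + t • e - xb) = A (z - xb) + t • A e := by
        rw [show z + t • e - xb = (z - xb) + t • e by abel, map_add, A.map_smul]
      rw [this, hC₀, hC₁]
      simp only [inner_sub_left, inner_add_left, real_inner_smul_left]
      ring
    rw [hexp]
    have h1 : |⟪Gy - Df - A (z + t • e - xb), e⟫| ≤ ‖Gy - Df - A (z + t • e - xb)‖ * ‖e‖ :=
      abs_real_inner_le_norm _ _
    refine h1.trans ?_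
    have h2 : ‖Gy - Df - A (z + t • e - xb)‖ ≤ ε * ‖z + t • e - xb‖ := hGyb
    have h3 : ‖z + t • e - xb‖ ≤ ‖z - xb‖ + ‖e‖ := by
      have : z + t • e - xb = (z - xb) + t • e := by abel
      rw [this]
      refine (norm_add_le _ _).trans ?_
      have : ‖t • e‖ ≤ ‖e‖ := by
        rw [norm_smul, Real.norm_eq_abs, abs_of_nonneg htI.1.le]
        nlinarith [norm_nonneg e, htI.1.le, htI.2.le]
      linarith
    calc ‖Gy - Df - A (z + t • e - xb)‖ * ‖e‖ ≤ (ε * (‖z - xb‖ + ‖e‖)) * ‖e‖ := by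
          refine mul_le_mul_of_nonneg_right (h2.trans ?_) (norm_nonneg _)
          exact mul_le_mul_of_nonneg_left h3 hε
      _ = M := by rw [hM]; ring
  -- FTC
  have hftc : φ 1 - φ 0 = ∫ t in Ioc (0:ℝ) 1, deriv φ t := ftc_lipschitz_aux hφlip
  have hφ1 : φ 1 = g (z + e) := by
    have := hagree (right_mem_Icc.2 zero_le_one)
    simp [hφ₀] at this
    exact this.symm
  have hφ0 : φ 0 = g z := by
    have := hagree (left_mem_Icc.2 zero_le_one)
    simp [hφ₀] at this
    exact this.symm
  -- integral of c
  have hcint : ∫ t in Ioc (0:ℝ) 1, (C₀ + t * C₁) = C₀ + 1/2 * C₁ := by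
    rw [← intervalIntegral.integral_of_le zero_le_one]
    rw [intervalIntegral.integral_add intervalIntegrable_const
      (intervalIntegral.intervalIntegrable_id.mul_const _)]
    rw [intervalIntegral.integral_mul_const, intervalIntegral.integral_const, integral_id]
    norm_num
  -- integrability of c
  have hcInt : IntegrableOn (fun t : ℝ => C₀ + t * C₁) (Ioc (0:ℝ) 1) :=
    (continuous_const.add (continuous_id.mul continuous_const)).integrableOn_Ioc
  have hderInt : IntegrableOn (deriv φ) (Ioc (0:ℝ) 1) := (lip_deriv_integrableOn_aux hφlip).2
  -- final bound
  have hdiff : φ 1 - φ 0 - (C₀ + 1/2 * C₁) = ∫ t in Ioc (0:ℝ) 1, (deriv φ t - (C₀ + t * C₁)) := by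
    rw [MeasureTheory.integral_sub hderInt hcInt, ← hcint, hftc]
  have hbound : |∫ t in Ioc (0:ℝ) 1, (deriv φ t - (C₀ + t * C₁))| ≤ M := by
    have := MeasureTheory.norm_integral_le_of_norm_le
      (f := fun t : ℝ => deriv φ t - (C₀ + t * C₁)) (g := fun _ : ℝ => M)
      (integrable_const M) (by filter_upwards [haeb] with t ht using by simpa using ht)
    rw [Real.norm_eq_abs] at this
    refine this.trans ?_
    rw [MeasureTheory.integral_const]
    simp [Real.volume_Ioc]
  calc |g (z + e) - g z - ⟪Df, e⟫ - ⟪A (z - xb), e⟫ - 1/2 * ⟪A e, e⟫|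
      = |φ 1 - φ 0 - (C₀ + 1/2 * C₁)| := by rw [hφ1, hφ0, hC₀, hC₁]; ring_nf
    _ ≤ M := by rw [hdiff]; exact hbound


private lemma key_estimate {n : ℕ} {g : Eucl n → ℝ} {xb Df : Eucl n} {A : Eucl n →L[ℝ] Eucl n}
    {K : NNReal} {δ ε : ℝ} (hδ : 0 < δ) (hε : 0 ≤ ε) {N : Set (Eucl n)}
    (hN : MeasurableSet N) (h0 : volume N = 0)
    (hlip : LipschitzOnWith K g (Metric.ball xb (2*δ)))
    (hGb : ∀ y ∈ Metric.ball xb (2*δ), y ∉ N → ∃ Gy, HasGradientAt g Gy y ∧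
        ‖Gy - Df - A (y - xb)‖ ≤ ε * ‖y - xb‖)
    {z y : Eucl n} (hz : z ∈ Metric.ball xb δ) (hy : y ∈ Metric.ball xb δ) :
    |g y - g z - ⟪Df, y - z⟫ - ⟪A (z - xb), y - z⟫ - 1/2 * ⟪A (y - z), y - z⟫|
      ≤ ε * ((‖z - xb‖ + ‖y - z‖) * ‖y - z‖) := by
  classical
  set e : Eucl n := y - z with he
  have hchoice : ∀ j : ℕ, ∃ w : Eucl n, ‖w‖ < min δ (1/(j+1)) ∧
      ∀ᵐ t ∂(volume.restrict (Ioo (0:ℝ) 1)), z + t • e + w ∉ N := by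
    intro j
    refine goodTranslate hN h0 z e ?_
    have : (0:ℝ) < 1/(j+1) := by positivity
    exact lt_min hδ this
  choose w hw1 hw2 using hchoice
  -- each translated segment estimate
  have hj : ∀ j : ℕ, |g (y + w j) - g (z + w j) - ⟪Df, e⟫ - ⟪A (z + w j - xb), e⟫
      - 1/2 * ⟪A e, e⟫| ≤ ε * ((‖z + w j - xb‖ + ‖e‖) * ‖e‖) := by
    intro j
    have hwδ : ‖w j‖ < δ := (hw1 j).trans_le (min_le_left _ _)
    have hseg : ∀ t ∈ Icc (0:ℝ) 1, (z + w j) + t • e ∈ Metric.ball xb (2*δ) := by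
      intro t ht
      have key : z + t • e - xb = (1-t) • (z - xb) + t • (y - xb) := by
        rw [he]; module
      have h1 : ‖z + t • e - xb‖ < δ := by
        rw [key]
        calc ‖(1-t) • (z - xb) + t • (y - xb)‖
            ≤ ‖(1-t) • (z - xb)‖ + ‖t • (y - xb)‖ := norm_add_le _ _
          _ = (1-t) * ‖z - xb‖ + t * ‖y - xb‖ := by
              rw [norm_smul, norm_smul, Real.norm_eq_abs, Real.norm_eq_abs,
                abs_of_nonneg (by linarith [ht.2]), abs_of_nonneg ht.1]
          _ < δ := by
              have hz' : ‖z - xb‖ < δ := by rwa [Metric.mem_ball, dist_eq_norm] at hz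
              have hy' : ‖y - xb‖ < δ := by rwa [Metric.mem_ball, dist_eq_norm] at hy
              rcases lt_or_ge t 1 with h1 | h1
              · have a1 : (1-t) * ‖z - xb‖ < (1-t) * δ :=
                  mul_lt_mul_of_pos_left hz' (by linarith)
                have a2 : t * ‖y - xb‖ ≤ t * δ := mul_le_mul_of_nonneg_left hy'.le ht.1
                nlinarith
              · have ht1 : t = 1 := le_antisymm ht.2 h1
                subst ht1
                simpa using hy'
      have : (z + w j) + t • e - xb = (z + t • e - xb) + w j := by abel
      rw [Metric.mem_ball, dist_eq_norm, this]
      calc ‖(z + t • e - xb) + w j‖ ≤ ‖z + t • e - xb‖ + ‖w j‖ := norm_add_le _ _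
        _ < 2 * δ := by linarith
    have hgood : ∀ᵐ t ∂(volume.restrict (Ioo (0:ℝ) 1)), (z + w j) + t • e ∉ N := by
      filter_upwards [hw2 j] with t ht
      have : (z + w j) + t • e = z + t • e + w j := by abel
      rwa [this]
    have := segment_estimate hε hlip hGb hseg hgood
    have hze : (z + w j) + e = y + w j := by rw [he]; abel
    rwa [hze] at this
  -- pass to the limit
  have hwlim : Tendsto w atTop (𝓝 0) := by
    refine squeeze_zero_norm (fun j => ((hw1 j).le.trans (min_le_right _ _))) ?_
    exact tendsto_one_div_add_atTop_nhds_zero_nat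
  have hz2 : Tendsto (fun j => z + w j) atTop (𝓝 z) := by
    simpa using tendsto_const_nhds.add hwlim
  have hy2 : Tendsto (fun j => y + w j) atTop (𝓝 y) := by
    simpa using tendsto_const_nhds.add hwlim
  have hzball : z ∈ Metric.ball xb (2*δ) := Metric.ball_subset_ball (by linarith) hz
  have hyball : y ∈ Metric.ball xb (2*δ) := Metric.ball_subset_ball (by linarith) hy
  have hgz : ContinuousAt g z :=
    hlip.continuousOn.continuousAt (Metric.isOpen_ball.mem_nhds hzball)
  have hgy : ContinuousAt g y :=
    hlip.continuousOn.continuousAt (Metric.isOpen_ball.mem_nhds hyball)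
  have hA : Continuous fun v : Eucl n => (⟪A v, e⟫ : ℝ) := A.continuous.inner continuous_const
  have tinner : Tendsto (fun j => (⟪A (z + w j - xb), e⟫ : ℝ)) atTop (𝓝 ⟪A (z - xb), e⟫) :=
    (hA.tendsto (z - xb)).comp (hz2.sub_const xb)
  have tnorm : Tendsto (fun j => ‖z + w j - xb‖) atTop (𝓝 ‖z - xb‖) :=
    ((hz2.sub_const xb).norm)
  have Tlhs : Tendsto (fun j => |g (y + w j) - g (z + w j) - ⟪Df, e⟫ - ⟪A (z + w j - xb), e⟫
      - 1/2 * ⟪A e, e⟫|) atTop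
      (𝓝 |g y - g z - ⟪Df, e⟫ - ⟪A (z - xb), e⟫ - 1/2 * ⟪A e, e⟫|) := by
    exact ((((hgy.tendsto.comp hy2).sub (hgz.tendsto.comp hz2)).sub
      tendsto_const_nhds).sub tinner).sub tendsto_const_nhds |>.abs
  have Trhs : Tendsto (fun j => ε * ((‖z + w j - xb‖ + ‖e‖) * ‖e‖)) atTop
      (𝓝 (ε * ((‖z - xb‖ + ‖e‖) * ‖e‖))) :=
    tendsto_const_nhds.mul ((tnorm.add tendsto_const_nhds).mul tendsto_const_nhds)
  exact le_of_tendsto_of_tendsto' Tlhs Trhs hj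


private lemma grad_mem_regSubdiff {n : ℕ} [Nontrivial (Eucl n)] {f : Eucl n → EReal} {g : Eucl n → ℝ}
    {y Gy : Eucl n} {ρ : ℝ} (hρ : 0 < ρ)
    (hfg : ∀ x ∈ Metric.ball y ρ, f x = ((g x : ℝ) : EReal))
    (hGy : HasGradientAt g Gy y) : Gy ∈ regSubdiff f y := by
  have hfy : f y = ((g y : ℝ) : EReal) := hfg y (Metric.mem_ball_self hρ)
  refine ⟨by rw [hfy]; exact EReal.coe_ne_top _, ?_⟩
  set q : Eucl n → ℝ := fun x => ‖x - y‖⁻¹ * (g x - g y - ⟪Gy, x - y⟫) with hq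
  have h0 := hasFDerivAt_iff_tendsto.1 hGy.hasFDerivAt
  have hqt : Tendsto q (𝓝 y) (𝓝 0) := by
    rw [tendsto_zero_iff_norm_tendsto_zero]
    refine h0.congr fun x => ?_
    rw [hq]
    simp only [Real.norm_eq_abs, abs_mul, abs_inv, abs_norm, InnerProductSpace.toDual_apply_apply]
  have hEq : ∀ᶠ x in 𝓝[≠] y, ((q x : ℝ) : EReal) =
      ((‖x - y‖⁻¹ : ℝ) : EReal) * (f x - f y - ((⟪Gy, x - y⟫ : ℝ) : EReal)) := by
    filter_upwards [mem_nhdsWithin_of_mem_nhds (Metric.ball_mem_nhds y hρ)] with x hx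
    rw [hfg x hx, hfy, hq]
    rw [← EReal.coe_sub, ← EReal.coe_sub, ← EReal.coe_mul]
  have hT : Tendsto (fun x => ((‖x - y‖⁻¹ : ℝ) : EReal) *
      (f x - f y - ((⟪Gy, x - y⟫ : ℝ) : EReal))) (𝓝[≠] y) (𝓝 (0 : EReal)) := by
    have : Tendsto (fun x => ((q x : ℝ) : EReal)) (𝓝[≠] y) (𝓝 ((0:ℝ) : EReal)) :=
      (continuous_coe_real_ereal.tendsto 0).comp (hqt.mono_left nhdsWithin_le_nhds)
    rw [EReal.coe_zero] at this
    exact this.congr' hEq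
  haveI := Module.punctured_nhds_neBot ℝ (Eucl n) y
  rw [hT.liminf_eq]


set_option maxHeartbeats 1000000 in
private lemma regSubdiff_bound {n : ℕ} {f : Eucl n → EReal} {g : Eucl n → ℝ} {xb Df z : Eucl n}
    {A : Eucl n →L[ℝ] Eucl n} {δ ε : ℝ} (hε : 0 ≤ ε)
    (hfg : ∀ x ∈ Metric.ball xb δ, f x = ((g x : ℝ) : EReal))
    (hest : ∀ z' ∈ Metric.ball xb δ, ∀ y' ∈ Metric.ball xb δ,
      |g y' - g z' - ⟪Df, y' - z'⟫ - ⟪A (z' - xb), y' - z'⟫ - 1/2 * ⟪A (y' - z'), y' - z'⟫|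
        ≤ ε * ((‖z' - xb‖ + ‖y' - z'‖) * ‖y' - z'‖))
    (hz : z ∈ Metric.ball xb δ) {v : Eucl n} (hv : v ∈ regSubdiff f z) :
    ‖v - (Df + A (z - xb))‖ ≤ ε * ‖z - xb‖ := by
  set u₀ : Eucl n := v - (Df + A (z - xb)) with hu₀
  rcases eq_or_ne u₀ 0 with h | h
  · rw [h, norm_zero]; positivity
  set u : Eucl n := ‖u₀‖⁻¹ • u₀ with hu
  have hu0 : ‖u₀‖ ≠ 0 := norm_ne_zero_iff.2 h
  have hunorm : ‖u‖ = 1 := by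
    rw [hu, norm_smul, norm_inv, norm_norm, inv_mul_cancel₀ hu0]
  -- key directional inequality
  have hdir : ⟪u₀, u⟫ ≤ ε * ‖z - xb‖ := by
    -- the map t ↦ z + t • u
    set m : ℝ → Eucl n := fun t => z + t • u with hm
    have hmten : Tendsto m (𝓝[>] (0:ℝ)) (𝓝[≠] z) := by
      refine tendsto_nhdsWithin_of_tendsto_nhds_of_eventually_within _ ?_ ?_
      · have : Tendsto (fun t : ℝ => z + t • u) (𝓝 0) (𝓝 (z + (0:ℝ) • u)) := by
          exact (continuous_const.add (continuous_id.smul continuous_const)).tendsto 0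
        simpa using this.mono_left nhdsWithin_le_nhds
      · filter_upwards [self_mem_nhdsWithin] with t (ht : 0 < t)
        have : t • u ≠ 0 := smul_ne_zero ht.ne' (by intro hh; rw [hh] at hunorm; simp at hunorm)
        simp [hm, mem_compl_iff, this]
    have hlim : (0 : EReal) ≤ liminf (fun t => ((‖m t - z‖⁻¹ : ℝ) : EReal) *
        (f (m t) - f z - ((⟪v, m t - z⟫ : ℝ) : EReal))) (𝓝[>] (0:ℝ)) := by
      refine le_trans hv.2 ?_
      have h1 : (fun t => ((‖m t - z‖⁻¹ : ℝ) : EReal) *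
          (f (m t) - f z - ((⟪v, m t - z⟫ : ℝ) : EReal))) =
          (fun x => ((‖x - z‖⁻¹ : ℝ) : EReal) *
            (f x - f z - ((⟪v, x - z⟫ : ℝ) : EReal))) ∘ m := rfl
      rw [h1, Filter.liminf_comp]
      exact liminf_le_liminf_of_le hmten
    -- show : for all ε₂ > 0, -ε₂ ≤ inner (-u₀) u + ε * ‖z - xb‖
    have main : ∀ ε₂ : ℝ, 0 < ε₂ → -ε₂ ≤ -⟪u₀, u⟫ + ε * ‖z - xb‖ := by
      intro ε₂ hε₂
      have hfreq : ∀ᶠ t in 𝓝[>] (0:ℝ), (((-ε₂ : ℝ)) : EReal) < ((‖m t - z‖⁻¹ : ℝ) : EReal) *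
          (f (m t) - f z - ((⟪v, m t - z⟫ : ℝ) : EReal)) := by
        refine eventually_lt_of_lt_liminf (lt_of_lt_of_le ?_ hlim)
        exact_mod_cast neg_neg_iff_pos.2 hε₂
      -- membership of m t in the ball, eventually
      have hzball : ∀ᶠ t in 𝓝[>] (0:ℝ), m t ∈ Metric.ball xb δ := by
        have : Tendsto m (𝓝[>] (0:ℝ)) (𝓝 z) := by
          have : Tendsto (fun t : ℝ => z + t • u) (𝓝 0) (𝓝 (z + (0:ℝ) • u)) :=
            (continuous_const.add (continuous_id.smul continuous_const)).tendsto 0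
          simpa using this.mono_left nhdsWithin_le_nhds
        exact this (Metric.isOpen_ball.mem_nhds hz)
      -- real inequality eventually
      have hev : ∀ᶠ t in 𝓝[>] (0:ℝ),
          -ε₂ ≤ -⟪u₀, u⟫ + ε * (‖z - xb‖ + t) + t * (1/2 * ⟪A u, u⟫) := by
        filter_upwards [hfreq, hzball, self_mem_nhdsWithin] with t hft hball (ht : 0 < t)
        -- rewrite the EReal quantity as a real one
        have hmz : m t - z = t • u := by rw [hm]; exact add_sub_cancel_left z (t • u)
        have hnorm : ‖m t - z‖ = t := by
          rw [hmz, norm_smul, Real.norm_eq_abs, abs_of_pos ht, hunorm, mul_one]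
        have hreal : ((‖m t - z‖⁻¹ : ℝ) : EReal) *
            (f (m t) - f z - ((⟪v, m t - z⟫ : ℝ) : EReal)) =
            (((t⁻¹ * (g (m t) - g z - ⟪v, m t - z⟫) : ℝ)) : EReal) := by
          rw [hfg _ hball, hfg _ hz, hnorm, ← EReal.coe_sub, ← EReal.coe_sub, ← EReal.coe_mul]
        rw [hreal] at hft
        have hft' : -ε₂ < t⁻¹ * (g (m t) - g z - ⟪v, m t - z⟫) := by exact_mod_cast hft
        -- upper estimate for g (m t) - g z
        have hub := hest z hz (m t) hball
        rw [hmz] at hub hft'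
        have habs := (abs_le.1 hub).2
        -- now pure computation
        have hiv : ⟪v, t • u⟫ = t * ⟪v, u⟫ := real_inner_smul_right v u t
        have hDfu : ⟪Df, t • u⟫ = t * ⟪Df, u⟫ := real_inner_smul_right _ _ _
        have hAzu : ⟪A (z - xb), t • u⟫ = t * ⟪A (z - xb), u⟫ := real_inner_smul_right _ _ _
        have hAuu : ⟪A (t • u), t • u⟫ = t * (t * ⟪A u, u⟫) := by
          rw [A.map_smul, real_inner_smul_right, real_inner_smul_left]
        have hn : ‖t • u‖ = t := by
          rw [norm_smul, Real.norm_eq_abs, abs_of_pos ht, hunorm, mul_one]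
        rw [hDfu, hAzu, hAuu, hn] at habs
        -- divide by t
        rw [hiv] at hft'
        have key : t⁻¹ * (g (m t) - g z - t * ⟪v, u⟫) ≤
            ⟪Df, u⟫ + ⟪A (z - xb), u⟫ - ⟪v, u⟫ + ε * (‖z - xb‖ + t) + t * (1/2 * ⟪A u, u⟫) := by
          rw [inv_mul_le_iff₀ ht]
          nlinarith [habs]
        have hvu : ⟪Df, u⟫ + ⟪A (z - xb), u⟫ - ⟪v, u⟫ = -⟪u₀, u⟫ := by
          rw [hu₀]
          simp only [inner_sub_left, inner_add_left]
          ring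
        rw [hvu] at key
        linarith
      -- pass to the limit t → 0⁺
      have hT : Tendsto (fun t : ℝ => -⟪u₀, u⟫ + ε * (‖z - xb‖ + t) + t * (1/2 * ⟪A u, u⟫))
          (𝓝[>] (0:ℝ)) (𝓝 (-⟪u₀, u⟫ + ε * (‖z - xb‖ + 0) + 0 * (1/2 * ⟪A u, u⟫))) := by
        refine Tendsto.mono_left ?_ nhdsWithin_le_nhds
        exact (tendsto_const_nhds.add (tendsto_const_nhds.mul
          (tendsto_const_nhds.add tendsto_id))).add (tendsto_id.mul tendsto_const_nhds)
      have := ge_of_tendsto hT hev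
      simpa using this
    -- conclude
    have : ∀ ε₂ : ℝ, 0 < ε₂ → ⟪u₀, u⟫ - ε * ‖z - xb‖ ≤ ε₂ := by
      intro ε₂ hε₂
      have := main ε₂ hε₂
      linarith
    have h2 := le_of_forall_pos_le_add (by
      intro ε₂ hε₂
      have := this ε₂ hε₂
      linarith : ∀ ε₂ : ℝ, 0 < ε₂ → ⟪u₀, u⟫ ≤ ε * ‖z - xb‖ + ε₂)
    exact h2
  -- finish : ⟪u₀, u⟫ = ‖u₀‖
  have : ⟪u₀, u⟫ = ‖u₀‖ := by
    rw [hu, real_inner_smul_right, real_inner_self_eq_norm_sq]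
    field_simp
  rw [this] at hdir
  exact hdir


set_option maxHeartbeats 2000000 in
/-- properties of functions twice differentiable in the extended sense:
(a) the limiting subdifferential reduces to the gradient; (b) an outer estimate
`∂f(x) ⊆ ∇f(xb) + ∇²f(xb)(x−xb) + o(‖x−xb‖)𝔹` with nonemptiness near `xb`;
(c) strict differentiability at `xb`; (d) the second-order Taylor expansion. -/
theorem statement0 {n : ℕ} (f : Eucl n → EReal) (hfbot : ∀ x, f x ≠ ⊥)
    (xb Df : Eucl n) (A : Eucl n →L[ℝ] Eucl n)
    (hf : TwiceDiffExt f xb Df A) :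
    limSubdiff f xb = {Df} ∧
    (∀ ε : ℝ, 0 < ε → ∃ U ∈ 𝓝 xb, ∀ x ∈ U,
      (limSubdiff f x).Nonempty ∧
      ∀ v ∈ limSubdiff f x, ‖v - (Df + A (x - xb))‖ ≤ ε * ‖x - xb‖) ∧
    Tendsto (fun p : Eucl n × Eucl n =>
        ((‖p.1 - p.2‖⁻¹ : ℝ) : EReal) *
          (f p.1 - f p.2 - ((⟪Df, p.1 - p.2⟫ : ℝ) : EReal)))
      (𝓝[{p : Eucl n × Eucl n | p.1 ≠ p.2}] (xb, xb)) (𝓝 (0 : EReal)) ∧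
    (∀ ε : ℝ, 0 < ε → ∃ U ∈ 𝓝 xb, ∀ x ∈ U,
      f x ≤ f xb + ((⟪Df, x - xb⟫ + 1/2 * ⟪x - xb, A (x - xb)⟫ + ε * ‖x - xb‖^2 : ℝ) : EReal) ∧
      f xb + ((⟪Df, x - xb⟫ + 1/2 * ⟪x - xb, A (x - xb)⟫ - ε * ‖x - xb‖^2 : ℝ) : EReal) ≤ f x) := by
  classical
  obtain ⟨hftop, hgrad0, U, D, K, G, hU, hDU, hnull, hfin, hlip, hGD, htend⟩ := hf
  set g : Eucl n → ℝ := fun y => (f y).toReal with hg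
  obtain ⟨ρ0, hρ0, hball⟩ : ∃ ρ0 > 0, Metric.ball xb ρ0 ⊆ U := by
    rcases Metric.mem_nhds_iff.1 hU with ⟨ρ0, h1, h2⟩
    exact ⟨ρ0, h1, h2⟩
  have hxbball : xb ∈ Metric.ball xb ρ0 := Metric.mem_ball_self hρ0
  have hfg : ∀ x ∈ Metric.ball xb ρ0, f x = ((g x : ℝ) : EReal) :=
    fun x hx => (EReal.coe_toReal (hfin x (hball hx)) (hfbot x)).symm
  set N : Set (Eucl n) := toMeasurable volume (U \ D) with hN
  have hNmeas : MeasurableSet N := measurableSet_toMeasurable _ _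
  have hN0 : volume N = 0 := by rw [hN, measure_toMeasurable]; exact hnull
  have hND : ∀ y, y ∈ U → y ∉ N → y ∈ D := by
    intro y hyU hyN
    by_contra hyD
    exact hyN (subset_toMeasurable _ _ ⟨hyU, hyD⟩)
  have hGball : ∀ ε : ℝ, 0 < ε → ∃ δ : ℝ, 0 < δ ∧ 2*δ ≤ ρ0 ∧
      ∀ y ∈ Metric.ball xb (2*δ), y ∉ N → ∃ Gy, HasGradientAt g Gy y ∧
        ‖Gy - Df - A (y - xb)‖ ≤ ε * ‖y - xb‖ := by
    intro ε hε
    have hev := (NormedAddCommGroup.tendsto_nhds_zero.1 htend) ε hε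
    rw [eventually_nhdsWithin_iff] at hev
    rcases Metric.eventually_nhds_iff.1 hev with ⟨r, hr, hball2⟩
    refine ⟨min r ρ0 / 2, by positivity, by
      rcases min_le_right r ρ0 with h; linarith [min_le_right r ρ0], ?_⟩
    intro y hy hyN
    have hy' : dist y xb < min r ρ0 := by
      rw [Metric.mem_ball] at hy; linarith [hy]
    have hyU : y ∈ U := hball (by
      rw [Metric.mem_ball]; exact lt_of_lt_of_le hy' (min_le_right _ _))
    have hyD : y ∈ D := hND y hyU hyN
    refine ⟨G y, hGD y hyD, ?_⟩
    rcases eq_or_ne y xb with rfl | hne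
    · have hDfeq : G y = Df := (hGD y hyD).unique hgrad0
      simp [hDfeq]
    · have hb := hball2 (lt_of_lt_of_le hy' (min_le_left _ _)) ⟨hyD, hne⟩
      have hpos : 0 < ‖y - xb‖ := by
        rw [norm_pos_iff, sub_ne_zero]; exact hne
      rw [norm_smul, Real.norm_eq_abs, abs_inv, abs_norm] at hb
      calc ‖G y - Df - A (y - xb)‖
          = ‖y - xb‖ * (‖y - xb‖⁻¹ * ‖G y - Df - A (y - xb)‖) := by
            field_simp
        _ ≤ ‖y - xb‖ * ε := mul_le_mul_of_nonneg_left hb.le hpos.le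
        _ = ε * ‖y - xb‖ := mul_comm _ _
  have EST : ∀ ε : ℝ, 0 < ε → ∃ δ : ℝ, 0 < δ ∧ Metric.ball xb δ ⊆ Metric.ball xb ρ0 ∧
      (∀ y ∈ Metric.ball xb δ, y ∉ N → ∃ Gy, HasGradientAt g Gy y ∧
        ‖Gy - Df - A (y - xb)‖ ≤ ε * ‖y - xb‖) ∧
      ∀ z ∈ Metric.ball xb δ, ∀ y ∈ Metric.ball xb δ,
        |g y - g z - ⟪Df, y - z⟫ - ⟪A (z - xb), y - z⟫ - 1/2 * ⟪A (y - z), y - z⟫|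
          ≤ ε * ((‖z - xb‖ + ‖y - z‖) * ‖y - z‖) := by
    intro ε hε
    obtain ⟨δ, hδ, h2δ, hGb⟩ := hGball ε hε
    have hsub2δ : Metric.ball xb (2*δ) ⊆ U :=
      subset_trans (Metric.ball_subset_ball h2δ) hball
    refine ⟨δ, hδ, Metric.ball_subset_ball (by linarith), ?_, ?_⟩
    · exact fun y hy => hGb y (Metric.ball_subset_ball (by linarith) hy)
    · intro z hz y hy
      exact key_estimate hδ hε.le hNmeas hN0 (hlip.mono hsub2δ) hGb hz hy
  rcases subsingleton_or_nontrivial (Eucl n) with hss | hnt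
  · -- subsingleton case
    have hDfreg : Df ∈ regSubdiff f xb := by
      refine ⟨hftop, ?_⟩
      have hempty : ({xb}ᶜ : Set (Eucl n)) = ∅ := by
        ext x
        simp [Subsingleton.elim x xb]
      rw [show (𝓝[≠] xb) = ⊥ by rw [hempty, nhdsWithin_empty]]
      refine le_liminf_of_le (by isBoundedDefault) ?_
      exact Filter.eventually_bot
    have hDflim : Df ∈ limSubdiff f xb :=
      ⟨hftop, fun _ => xb, fun _ => Df, tendsto_const_nhds, tendsto_const_nhds,
        tendsto_const_nhds, fun _ => hDfreg⟩
    refine ⟨?_, ?_, ?_, ?_⟩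
    · refine Set.eq_singleton_iff_unique_mem.2 ⟨hDflim, fun v _ => Subsingleton.elim v Df⟩
    · intro ε hε
      refine ⟨univ, univ_mem, fun x _ => ⟨⟨Df, by rwa [Subsingleton.elim x xb]⟩, ?_⟩⟩
      intro v hv
      have h1 : v - (Df + A (x - xb)) = 0 := Subsingleton.elim _ _
      rw [h1, norm_zero]
      positivity
    · have hempty : {p : Eucl n × Eucl n | p.1 ≠ p.2} = ∅ := by
        ext p
        simp [Subsingleton.elim p.1 p.2]
      rw [hempty, nhdsWithin_empty]
      exact tendsto_bot
    · intro ε hε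
      refine ⟨univ, univ_mem, fun x _ => ?_⟩
      have hx : x = xb := Subsingleton.elim x xb
      subst hx
      constructor <;> simp
  · -- nontrivial case
    have hlipρ : LipschitzOnWith K g (Metric.ball xb ρ0) := hlip.mono hball
    -- (a)
    have parta : limSubdiff f xb = {Df} := by
      have hDfreg : Df ∈ regSubdiff f xb := grad_mem_regSubdiff hρ0 hfg hgrad0
      have hDflim : Df ∈ limSubdiff f xb :=
        ⟨hftop, fun _ => xb, fun _ => Df, tendsto_const_nhds, tendsto_const_nhds,
          tendsto_const_nhds, fun _ => hDfreg⟩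
      refine Set.eq_singleton_iff_unique_mem.2 ⟨hDflim, ?_⟩
      rintro v ⟨hvtop, x, vk, hx, hfx, hvk, hreg⟩
      obtain ⟨δ1, hδ1, hsub1, hGb1, hest1⟩ := EST 1 one_pos
      have hev : ∀ᶠ k in atTop, x k ∈ Metric.ball xb δ1 :=
        hx (Metric.isOpen_ball.mem_nhds (Metric.mem_ball_self hδ1))
      have hbd : ∀ᶠ k in atTop, ‖vk k - Df‖ ≤ (1 + ‖A‖) * ‖x k - xb‖ := by
        filter_upwards [hev] with k hk
        have h1 := regSubdiff_bound zero_le_one (fun x' hx' => hfg x' (hsub1 hx'))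
          hest1 hk (hreg k)
        have h2 : ‖vk k - Df‖ ≤ ‖vk k - (Df + A (x k - xb))‖ + ‖A (x k - xb)‖ := by
          have heq : vk k - Df = (vk k - (Df + A (x k - xb))) + A (x k - xb) := by abel
          rw [heq]; exact norm_add_le _ _
        have h3 : ‖A (x k - xb)‖ ≤ ‖A‖ * ‖x k - xb‖ := A.le_opNorm _
        calc ‖vk k - Df‖ ≤ 1 * ‖x k - xb‖ + ‖A‖ * ‖x k - xb‖ := by linarith
          _ = (1 + ‖A‖) * ‖x k - xb‖ := by ring
      have hxnorm : Tendsto (fun k => (1 + ‖A‖) * ‖x k - xb‖) atTop (𝓝 0) := by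
        have h4 := (hx.sub_const xb).norm
        simpa using tendsto_const_nhds.mul h4
      have hvd : Tendsto (fun k => vk k - Df) atTop (𝓝 0) := squeeze_zero_norm' hbd hxnorm
      have hvDf : Tendsto vk atTop (𝓝 Df) := by
        have := hvd.add (tendsto_const_nhds : Tendsto (fun _ : ℕ => Df) atTop (𝓝 Df))
        simpa using this
      exact tendsto_nhds_unique hvk hvDf
    -- (b)
    have partb : ∀ ε : ℝ, 0 < ε → ∃ U' ∈ 𝓝 xb, ∀ x ∈ U',
        (limSubdiff f x).Nonempty ∧
        ∀ v ∈ limSubdiff f x, ‖v - (Df + A (x - xb))‖ ≤ ε * ‖x - xb‖ := by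
      intro ε hε
      obtain ⟨δ, hδ, hsubρ, hGb, hest⟩ := EST ε hε
      refine ⟨Metric.ball xb δ, Metric.ball_mem_nhds xb hδ, fun x hx => ⟨?_, ?_⟩⟩
      · -- nonemptiness
        have hfxcoe : f x = ((g x : ℝ) : EReal) := hfg x (hsubρ hx)
        have hpick : ∀ k : ℕ, ∃ y', (y' ∈ Metric.ball x (1/(k+1:ℝ)) ∩ Metric.ball xb δ) ∧
            y' ∉ N := by
          intro k
          by_contra hc
          push_neg at hc
          have hsubN : Metric.ball x (1/(k+1:ℝ)) ∩ Metric.ball xb δ ⊆ N := fun y' hy' =>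
            hc y' hy'
          have hzero : volume (Metric.ball x (1/(k+1:ℝ)) ∩ Metric.ball xb δ) = 0 :=
            measure_mono_null hsubN hN0
          have hop : IsOpen (Metric.ball x (1/(k+1:ℝ)) ∩ Metric.ball xb δ) :=
            Metric.isOpen_ball.inter Metric.isOpen_ball
          have hne : (Metric.ball x (1/(k+1:ℝ)) ∩ Metric.ball xb δ).Nonempty :=
            ⟨x, Metric.mem_ball_self (by positivity), hx⟩
          exact absurd hzero (hop.measure_pos volume hne).ne'
        choose y hy1 hyN using hpick
        have hyx : Tendsto y atTop (𝓝 x) := by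
          refine tendsto_iff_dist_tendsto_zero.2 ?_
          refine squeeze_zero (fun k => dist_nonneg) (fun k => (Metric.mem_ball.1 (hy1 k).1).le) ?_
          exact tendsto_one_div_add_atTop_nhds_zero_nat
        have hGchoice : ∀ k : ℕ, ∃ Gy, HasGradientAt g Gy (y k) ∧
            ‖Gy - Df - A (y k - xb)‖ ≤ ε * ‖y k - xb‖ :=
          fun k => hGb (y k) (hy1 k).2 (hyN k)
        choose Gk hGk1 hGk2 using hGchoice
        set R : ℝ := ‖Df‖ + (‖A‖ + ε) * δ with hR
        have hGmem : ∀ k, Gk k ∈ Metric.closedBall (0 : Eucl n) R := by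
          intro k
          rw [Metric.mem_closedBall, dist_zero_right]
          have hyδ : ‖y k - xb‖ ≤ δ := by
            have := Metric.mem_ball.1 (hy1 k).2
            rw [dist_eq_norm] at this
            exact this.le
          have h1 : ‖Gk k‖ ≤ ‖Gk k - Df - A (y k - xb)‖ + ‖Df‖ + ‖A (y k - xb)‖ := by
            have heq : Gk k = (Gk k - Df - A (y k - xb)) + Df + A (y k - xb) := by abel
            calc ‖Gk k‖ = ‖(Gk k - Df - A (y k - xb)) + Df + A (y k - xb)‖ := by rw [← heq]
              _ ≤ ‖(Gk k - Df - A (y k - xb)) + Df‖ + ‖A (y k - xb)‖ := norm_add_le _ _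
              _ ≤ ‖Gk k - Df - A (y k - xb)‖ + ‖Df‖ + ‖A (y k - xb)‖ := by
                  linarith [norm_add_le (Gk k - Df - A (y k - xb)) Df]
          have h2 : ‖A (y k - xb)‖ ≤ ‖A‖ * δ := by
            refine (A.le_opNorm _).trans ?_
            exact mul_le_mul_of_nonneg_left hyδ (norm_nonneg _)
          have h3 : ‖Gk k - Df - A (y k - xb)‖ ≤ ε * δ := by
            refine (hGk2 k).trans ?_
            exact mul_le_mul_of_nonneg_left hyδ hε.le
          rw [hR]
          nlinarith [h1, h2, h3]
        obtain ⟨v, hvcl, φ, hφ, hvtend⟩ :=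
          tendsto_subseq_of_bounded Metric.isBounded_closedBall hGmem
        have hregall : ∀ k, Gk k ∈ regSubdiff f (y k) := by
          intro k
          have hykρ0 : y k ∈ Metric.ball xb ρ0 := hsubρ (hy1 k).2
          have hρk : 0 < ρ0 - dist (y k) xb := by
            rw [Metric.mem_ball] at hykρ0
            linarith
          refine grad_mem_regSubdiff hρk ?_ (hGk1 k)
          intro x' hx'
          refine hfg x' ?_
          rw [Metric.mem_ball] at hx' ⊢
          calc dist x' xb ≤ dist x' (y k) + dist (y k) xb := dist_triangle _ _ _
            _ < (ρ0 - dist (y k) xb) + dist (y k) xb := by linarith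
            _ = ρ0 := by ring
        refine ⟨v, ?_, y ∘ φ, Gk ∘ φ, hyx.comp hφ.tendsto_atTop, ?_, hvtend, fun k => hregall (φ k)⟩
        · rw [hfxcoe]; exact EReal.coe_ne_top _
        · have hgcont : ContinuousAt g x :=
            hlipρ.continuousOn.continuousAt (Metric.isOpen_ball.mem_nhds (hsubρ hx))
          have hgy : Tendsto (fun k => g (y (φ k))) atTop (𝓝 (g x)) :=
            hgcont.tendsto.comp (hyx.comp hφ.tendsto_atTop)
          have hcoe : Tendsto (fun k => ((g (y (φ k)) : ℝ) : EReal)) atTop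
              (𝓝 ((g x : ℝ) : EReal)) := (continuous_coe_real_ereal.tendsto _).comp hgy
          rw [hfxcoe]
          refine hcoe.congr fun k => ?_
          exact (hfg _ (hsubρ (hy1 (φ k)).2)).symm
      · -- the bound
        rintro v ⟨hvtop, xk, vk, hxk, hfxk, hvk, hregk⟩
        have hev : ∀ᶠ k in atTop, xk k ∈ Metric.ball xb δ :=
          hxk (Metric.isOpen_ball.mem_nhds hx)
        have hbd : ∀ᶠ k in atTop, ‖vk k - (Df + A (xk k - xb))‖ ≤ ε * ‖xk k - xb‖ := by
          filter_upwards [hev] with k hk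
          exact regSubdiff_bound hε.le (fun x' hx' => hfg x' (hsubρ hx')) hest hk (hregk k)
        have hTl : Tendsto (fun k => ‖vk k - (Df + A (xk k - xb))‖) atTop
            (𝓝 ‖v - (Df + A (x - xb))‖) := by
          refine Tendsto.norm ?_
          refine hvk.sub ?_
          refine tendsto_const_nhds.add ?_
          exact (A.continuous.tendsto _).comp (hxk.sub_const xb)
        have hTr : Tendsto (fun k => ε * ‖xk k - xb‖) atTop (𝓝 (ε * ‖x - xb‖)) :=
          tendsto_const_nhds.mul (hxk.sub_const xb).norm
        exact le_of_tendsto_of_tendsto hTl hTr hbd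
    -- (c)
    have partc : Tendsto (fun p : Eucl n × Eucl n =>
        ((‖p.1 - p.2‖⁻¹ : ℝ) : EReal) *
          (f p.1 - f p.2 - ((⟪Df, p.1 - p.2⟫ : ℝ) : EReal)))
        (𝓝[{p : Eucl n × Eucl n | p.1 ≠ p.2}] (xb, xb)) (𝓝 (0 : EReal)) := by
      obtain ⟨δ1, hδ1, hsub1, hGb1, hest1⟩ := EST 1 one_pos
      set h : Eucl n × Eucl n → ℝ :=
        fun p => ‖p.1 - p.2‖⁻¹ * (g p.1 - g p.2 - ⟪Df, p.1 - p.2⟫) with hh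
      have hreal : Tendsto h (𝓝[{p : Eucl n × Eucl n | p.1 ≠ p.2}] (xb, xb)) (𝓝 0) := by
        rw [Metric.tendsto_nhdsWithin_nhds]
        intro ε hε
        have hApos : (0:ℝ) ≤ ‖A‖ := norm_nonneg _
        set r : ℝ := min δ1 (ε / (2*‖A‖ + 4)) with hr
        have hrpos : 0 < r := lt_min hδ1 (by positivity)
        have hrδ1 : r ≤ δ1 := min_le_left _ _
        have hrε : r ≤ ε / (2*‖A‖ + 4) := min_le_right _ _
        refine ⟨r, hrpos, ?_⟩
        rintro p hp hdist
        rw [Prod.dist_eq] at hdist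
        have h1 : p.1 ∈ Metric.ball xb δ1 := by
          rw [Metric.mem_ball]
          exact lt_of_lt_of_le (lt_of_le_of_lt (le_max_left _ _) hdist) hrδ1
        have h2 : p.2 ∈ Metric.ball xb δ1 := by
          rw [Metric.mem_ball]
          exact lt_of_lt_of_le (lt_of_le_of_lt (le_max_right _ _) hdist) hrδ1
        set d : Eucl n := p.1 - p.2 with hd
        have hdne : d ≠ 0 := sub_ne_zero.2 hp
        have hdpos : 0 < ‖d‖ := norm_pos_iff.2 hdne
        have hkey := hest1 p.2 h2 p.1 h1
        -- bounds on the auxiliary quantities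
        have hn2 : ‖p.2 - xb‖ < r := by
          rw [← dist_eq_norm]
          exact lt_of_le_of_lt (le_max_right _ _) hdist
        have hnd : ‖d‖ < 2 * r := by
          have e1 : ‖d‖ ≤ ‖p.1 - xb‖ + ‖p.2 - xb‖ := by
            have : d = (p.1 - xb) - (p.2 - xb) := by rw [hd]; abel
            rw [this]
            exact norm_sub_le _ _
          have e2 : ‖p.1 - xb‖ < r := by
            rw [← dist_eq_norm]
            exact lt_of_le_of_lt (le_max_left _ _) hdist
          linarith
        have hAin : |⟪A (p.2 - xb), d⟫| ≤ ‖A‖ * ‖p.2 - xb‖ * ‖d‖ := by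
          refine (abs_real_inner_le_norm _ _).trans ?_
          exact mul_le_mul_of_nonneg_right (A.le_opNorm _) (norm_nonneg _)
        have hAdd : |⟪A d, d⟫| ≤ ‖A‖ * ‖d‖ * ‖d‖ := by
          refine (abs_real_inner_le_norm _ _).trans ?_
          exact mul_le_mul_of_nonneg_right (A.le_opNorm _) (norm_nonneg _)
        have hnum : |g p.1 - g p.2 - ⟪Df, d⟫| ≤
            (‖A‖ * ‖p.2 - xb‖ + 1/2 * (‖A‖ * ‖d‖) + (‖p.2 - xb‖ + ‖d‖)) * ‖d‖ := by
          have htri : |g p.1 - g p.2 - ⟪Df, d⟫| ≤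
              |g p.1 - g p.2 - ⟪Df, d⟫ - ⟪A (p.2 - xb), d⟫ - 1/2 * ⟪A d, d⟫|
                + |⟪A (p.2 - xb), d⟫| + 1/2 * |⟪A d, d⟫| := by
            have := abs_add_le (g p.1 - g p.2 - ⟪Df, d⟫ - ⟪A (p.2 - xb), d⟫ - 1/2 * ⟪A d, d⟫
              + ⟪A (p.2 - xb), d⟫) (1/2 * ⟪A d, d⟫)
            have h2' := abs_add_le (g p.1 - g p.2 - ⟪Df, d⟫ - ⟪A (p.2 - xb), d⟫ - 1/2 * ⟪A d, d⟫)
              (⟪A (p.2 - xb), d⟫)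
            have habs12 : |1/2 * ⟪A d, d⟫| = 1/2 * |⟪A d, d⟫| := by
              rw [abs_mul]
              norm_num
            calc |g p.1 - g p.2 - ⟪Df, d⟫| = |(g p.1 - g p.2 - ⟪Df, d⟫ - ⟪A (p.2 - xb), d⟫
                  - 1/2 * ⟪A d, d⟫ + ⟪A (p.2 - xb), d⟫) + 1/2 * ⟪A d, d⟫| := by ring_nf
              _ ≤ _ := this
              _ ≤ _ := by rw [habs12] at *; linarith
          refine htri.trans ?_
          have : 1 * ((‖p.2 - xb‖ + ‖d‖) * ‖d‖) = (‖p.2 - xb‖ + ‖d‖) * ‖d‖ := by ring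
          rw [this] at hkey
          nlinarith [hkey, hAin, hAdd, norm_nonneg d]
        rw [Real.dist_eq, sub_zero, hh]
        have hhp : |‖d‖⁻¹ * (g p.1 - g p.2 - ⟪Df, d⟫)| =
            ‖d‖⁻¹ * |g p.1 - g p.2 - ⟪Df, d⟫| := by
          rw [abs_mul, abs_inv, abs_norm]
        rw [hhp]
        have hfinal : ‖d‖⁻¹ * |g p.1 - g p.2 - ⟪Df, d⟫| ≤
            ‖A‖ * ‖p.2 - xb‖ + 1/2 * (‖A‖ * ‖d‖) + (‖p.2 - xb‖ + ‖d‖) := by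
          rw [inv_mul_le_iff₀ hdpos]
          calc |g p.1 - g p.2 - ⟪Df, d⟫|
              ≤ (‖A‖ * ‖p.2 - xb‖ + 1/2 * (‖A‖ * ‖d‖) + (‖p.2 - xb‖ + ‖d‖)) * ‖d‖ := hnum
            _ = _ := by ring
        refine lt_of_le_of_lt hfinal ?_
        have hfin2 : ‖A‖ * ‖p.2 - xb‖ + 1/2 * (‖A‖ * ‖d‖) + (‖p.2 - xb‖ + ‖d‖) <
            r * (2*‖A‖ + 4) := by
          have b1 : ‖A‖ * ‖p.2 - xb‖ ≤ ‖A‖ * r := mul_le_mul_of_nonneg_left hn2.le hApos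
          have b2 : ‖A‖ * ‖d‖ ≤ ‖A‖ * (2*r) := mul_le_mul_of_nonneg_left hnd.le hApos
          nlinarith [hn2, hnd, hrpos]
        refine lt_of_lt_of_le hfin2 ?_
        calc r * (2*‖A‖ + 4) ≤ (ε / (2*‖A‖ + 4)) * (2*‖A‖ + 4) := by
              refine mul_le_mul_of_nonneg_right hrε (by positivity)
          _ = ε := by field_simp
      have hEq : ∀ᶠ p in 𝓝[{p : Eucl n × Eucl n | p.1 ≠ p.2}] (xb, xb),
          ((h p : ℝ) : EReal) = ((‖p.1 - p.2‖⁻¹ : ℝ) : EReal) *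
            (f p.1 - f p.2 - ((⟪Df, p.1 - p.2⟫ : ℝ) : EReal)) := by
        have hball2 : Metric.ball xb ρ0 ×ˢ Metric.ball xb ρ0 ∈ 𝓝 (xb, xb) :=
          prod_mem_nhds (Metric.ball_mem_nhds _ hρ0) (Metric.ball_mem_nhds _ hρ0)
        filter_upwards [mem_nhdsWithin_of_mem_nhds hball2] with p hp
        rw [hfg _ hp.1, hfg _ hp.2, ← EReal.coe_sub, ← EReal.coe_sub, ← EReal.coe_mul]
      have hcoe : Tendsto (fun p => ((h p : ℝ) : EReal))
          (𝓝[{p : Eucl n × Eucl n | p.1 ≠ p.2}] (xb, xb)) (𝓝 (0 : EReal)) := by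
        have := (continuous_coe_real_ereal.tendsto 0).comp hreal
        simpa [Function.comp_def] using this
      exact hcoe.congr' hEq
    -- (d)
    have partd : ∀ ε : ℝ, 0 < ε → ∃ U' ∈ 𝓝 xb, ∀ x ∈ U',
        f x ≤ f xb + ((⟪Df, x - xb⟫ + 1/2 * ⟪x - xb, A (x - xb)⟫ + ε * ‖x - xb‖^2 : ℝ) : EReal) ∧
        f xb + ((⟪Df, x - xb⟫ + 1/2 * ⟪x - xb, A (x - xb)⟫ - ε * ‖x - xb‖^2 : ℝ) : EReal) ≤ f x := by
      intro ε hε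
      obtain ⟨δ, hδ, hsubρ, hGb, hest⟩ := EST ε hε
      refine ⟨Metric.ball xb δ, Metric.ball_mem_nhds xb hδ, fun x hx => ?_⟩
      have h := hest xb (Metric.mem_ball_self hδ) x hx
      rw [sub_self] at h
      simp only [map_zero, inner_zero_left, norm_zero, zero_add, sub_zero] at h
      have habs := abs_le.1 h
      have hcomm : ⟪x - xb, A (x - xb)⟫ = ⟪A (x - xb), x - xb⟫ := real_inner_comm _ _
      have hsq : ε * (‖x - xb‖ * ‖x - xb‖) = ε * ‖x - xb‖^2 := by ring
      have hub : g x ≤ g xb + (⟪Df, x - xb⟫ + 1/2 * ⟪x - xb, A (x - xb)⟫ + ε * ‖x - xb‖^2) := by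
        have := habs.2
        rw [hcomm]
        nlinarith [this]
      have hlb : g xb + (⟪Df, x - xb⟫ + 1/2 * ⟪x - xb, A (x - xb)⟫ - ε * ‖x - xb‖^2) ≤ g x := by
        have := habs.1
        rw [hcomm]
        nlinarith [this]
      rw [hfg x (hsubρ hx), hfg xb hxbball]
      constructor
      · rw [← EReal.coe_add]
        exact_mod_cast hub
      · rw [← EReal.coe_add]
        exact_mod_cast hlb
    exact ⟨parta, partb, partc, partd⟩
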